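/- Let T be a rooted label tree with node probability estimates η̂_v(x) ∈ [0,1] satisfying the normalization η̂_v(x) ≤ min(1, Σ_{v' child of v} η̂_{v'}(x)) and max_{v' child of v} η̂_{v'}(x) ≤ η̂_v(x), for all internal v. For a threshold τ ∈ (0,1], the prediction cost c_τ(T,x) = 1 + Σ_{v ∈ V(T)} 1{η̂_v(x) ≥ τ}·deg(v) satisfies c_τ(T,x) ≤ 1 + ⌊P̂/τ⌋·depth(T)·Δ(T), where P̂ = Σ_{leaves ℓ} η̂_ℓ(x), depth(T) is the tree depth and Δ(T) the maximum degree. -/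

import Mathlib

/-- A rooted tree in which every node carries a real value (a probability estimate `η̂_v(x)`). -/
inductive VTree where
  | leaf : ℝ → VTree
  | node : ℝ → List VTree → VTree

namespace VTree

/-- The value attached to the root of the (sub)tree. -/
def val : VTree → ℝ
  | .leaf r => r
  | .node r _ => r

/-- All values lie in `[0,1]` and the normalization properties hold at every internal node:
`η̂_v ≤ min(1, ∑_{v' child of v} η̂_{v'})` and `max_{v' child of v} η̂_{v'} ≤ η̂_v`. -/
def Valid : VTree → Prop
  | .leaf r => 0 ≤ r ∧ r ≤ 1
  | .node r ts => 0 ≤ r ∧ r ≤ 1 ∧ r ≤ min 1 ((ts.map val).sum) ∧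
      (∀ c ∈ ts, c.val ≤ r) ∧ ∀ c ∈ ts, c.Valid

/-- `∑_{v ∈ V(T)} 1{η̂_v ≥ τ}·deg(v)`, i.e. the prediction cost minus one. -/
noncomputable def costTau (τ : ℝ) : VTree → ℕ
  | .leaf _ => 0
  | .node r ts => (if τ ≤ r then ts.length else 0)
      + (ts.attach.map (fun ⟨t, _⟩ => t.costTau τ)).sum

/-- Depth of the tree: maximum number of edges on a root-to-leaf path. -/
def depth : VTree → ℕ
  | .leaf _ => 0
  | .node _ ts => 1 + (ts.attach.map (fun ⟨t, _⟩ => t.depth)).foldr max 0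

/-- Maximum degree (number of children) over all nodes. -/
def maxdeg : VTree → ℕ
  | .leaf _ => 0
  | .node _ ts => max ts.length ((ts.attach.map (fun ⟨t, _⟩ => t.maxdeg)).foldr max 0)

/-- `P̂ = ∑_{leaves ℓ} η̂_ℓ(x)`. -/
def leafSum : VTree → ℝ
  | .leaf r => r
  | .node _ ts => (ts.attach.map (fun ⟨t, _⟩ => t.leafSum)).sum


lemma le_foldr_max {l : List ℕ} {x : ℕ} (h : x ∈ l) : x ≤ l.foldr max 0 := by
  induction l with
  | nil => cases h
  | cons a tl ih =>
    rcases List.mem_cons.mp h with rfl | h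
    · exact le_max_left _ _
    · exact le_trans (ih h) (le_max_right _ _)

lemma leafSum_nonneg : ∀ t : VTree, t.Valid → 0 ≤ t.leafSum
  | .leaf r, h => by
    simp only [Valid] at h
    simpa [leafSum] using h.1
  | .node r ts, h => by
    simp only [Valid] at h
    simp only [leafSum, List.attach_map_val]
    apply List.sum_nonneg
    intro x hx
    obtain ⟨c, hc, rfl⟩ := List.mem_map.mp hx
    exact leafSum_nonneg c (h.2.2.2.2 c hc)
  termination_by t => sizeOf t
  decreasing_by
    simp_wf
    have := List.sizeOf_lt_of_mem hc
    omega

lemma val_le_leafSum : ∀ t : VTree, t.Valid → t.val ≤ t.leafSum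
  | .leaf r, _ => by simp [val, leafSum]
  | .node r ts, h => by
    simp only [Valid] at h
    simp only [val, leafSum, List.attach_map_val]
    refine le_trans (le_trans h.2.2.1 (min_le_right _ _)) ?_
    exact List.sum_le_sum fun c hc => val_le_leafSum c (h.2.2.2.2 c hc)
  termination_by t => sizeOf t
  decreasing_by
    simp_wf
    have := List.sizeOf_lt_of_mem hc
    omega

lemma floor_sum_le {τ : ℝ} (hτ : 0 < τ) :
    ∀ l : List ℝ, (∀ x ∈ l, 0 ≤ x) → (l.map (fun x => ⌊x / τ⌋₊)).sum ≤ ⌊l.sum / τ⌋₊ := by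
  intro l
  induction l with
  | nil => simp
  | cons a tl ih =>
    intro h
    have ha : 0 ≤ a := h a (List.mem_cons_self)
    have htl : 0 ≤ tl.sum := List.sum_nonneg fun x hx => h x (List.mem_cons_of_mem a hx)
    simp only [List.map_cons, List.sum_cons]
    refine le_trans (Nat.add_le_add_left (ih fun x hx => h x (List.mem_cons_of_mem a hx)) _) ?_
    rw [Nat.le_floor_iff (by positivity)]
    push_cast
    rw [add_div]
    exact add_le_add (Nat.floor_le (by positivity)) (Nat.floor_le (by positivity))

lemma costTau_le (τ : ℝ) (hτ : 0 < τ) :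
    ∀ t : VTree, t.Valid → t.costTau τ ≤ ⌊t.leafSum / τ⌋₊ * t.depth * t.maxdeg
  | .leaf r, _ => by simp [costTau, depth, maxdeg]
  | .node r ts, h => by
    simp only [Valid] at h
    simp only [costTau, depth, maxdeg, leafSum, List.attach_map_val]
    set D := (ts.map depth).foldr max 0 with hD
    set M := max ts.length ((ts.map maxdeg).foldr max 0) with hM
    set P := (ts.map leafSum).sum with hP
    have hS : (ts.map (fun c => c.costTau τ)).sum ≤ ⌊P / τ⌋₊ * D * M := by
      have h1 : (ts.map (fun c => c.costTau τ)).sum ≤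
          (ts.map (fun c => ⌊c.leafSum / τ⌋₊ * (D * M))).sum := by
        apply List.sum_le_sum
        intro c hc
        have hvc := h.2.2.2.2 c hc
        have hdc : c.depth ≤ D := le_foldr_max (List.mem_map_of_mem (f := depth) hc)
        have hmc : c.maxdeg ≤ M :=
          le_trans (le_foldr_max (List.mem_map_of_mem (f := maxdeg) hc)) (le_max_right _ _)
        calc c.costTau τ ≤ ⌊c.leafSum / τ⌋₊ * c.depth * c.maxdeg := costTau_le τ hτ c hvc
          _ ≤ ⌊c.leafSum / τ⌋₊ * (D * M) := by
              rw [mul_assoc]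
              exact Nat.mul_le_mul_left _ (Nat.mul_le_mul hdc hmc)
      refine le_trans h1 ?_
      rw [List.sum_map_mul_right ts (fun c => ⌊c.leafSum / τ⌋₊) (D * M)]
      have h3 : (ts.map fun c => ⌊c.leafSum / τ⌋₊).sum ≤ ⌊P / τ⌋₊ := by
        rw [hP, show (ts.map fun c => ⌊c.leafSum / τ⌋₊) =
              ((ts.map leafSum).map fun x => ⌊x / τ⌋₊) by rw [List.map_map]; rfl]
        exact floor_sum_le hτ (ts.map leafSum)
          (by rintro x hx; obtain ⟨c, hc, rfl⟩ := List.mem_map.mp hx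
              exact leafSum_nonneg c (h.2.2.2.2 c hc))
      calc (ts.map fun c => ⌊c.leafSum / τ⌋₊).sum * (D * M) ≤ ⌊P / τ⌋₊ * (D * M) :=
            Nat.mul_le_mul_right _ h3
        _ = ⌊P / τ⌋₊ * D * M := by ring
    have hroot : (if τ ≤ r then ts.length else 0) ≤ ⌊P / τ⌋₊ * M := by
      split
      next hr =>
        have hrP : r ≤ P := by
          rw [hP]
          refine le_trans (le_trans h.2.2.1 (min_le_right _ _)) ?_
          exact List.sum_le_sum fun c hc => val_le_leafSum c (h.2.2.2.2 c hc)
        have h1 : 1 ≤ ⌊P / τ⌋₊ := by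
          rw [Nat.one_le_iff_ne_zero, ← Nat.pos_iff_ne_zero, Nat.floor_pos,
            le_div_iff₀ hτ, one_mul]
          exact le_trans hr hrP
        calc ts.length ≤ M := le_max_left _ _
          _ = 1 * M := (one_mul M).symm
          _ ≤ ⌊P / τ⌋₊ * M := Nat.mul_le_mul_right _ h1
      next => exact Nat.zero_le _
    calc (if τ ≤ r then ts.length else 0) + (ts.map (fun c => c.costTau τ)).sum
        ≤ ⌊P / τ⌋₊ * M + ⌊P / τ⌋₊ * D * M := Nat.add_le_add hroot hS
      _ = ⌊P / τ⌋₊ * (1 + D) * M := by ring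
  termination_by t => sizeOf t
  decreasing_by
    simp_wf
    have := List.sizeOf_lt_of_mem hc
    omega

end VTree

/-- Prediction-cost bound: for a normalized estimate tree and threshold `τ ∈ (0,1]`,
`c_τ(T,x) = 1 + ∑_v 1{η̂_v ≥ τ}·deg(v) ≤ 1 + ⌊P̂/τ⌋·depth(T)·Δ(T)`. -/
theorem stmt_17 (t : VTree) (hv : t.Valid) (τ : ℝ) (hτ0 : 0 < τ) (hτ1 : τ ≤ 1) :
    1 + t.costTau τ ≤ 1 + ⌊t.leafSum / τ⌋₊ * t.depth * t.maxdeg :=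
  Nat.add_le_add_left (VTree.costTau_le τ hτ0 t hv) 1
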